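/- Let G be a graph of girth at least 6 such that every two vertices of degree at least 3 are at distance at least 6 from each other. Then χ_pcf(G) ≤ 4. -/

import Mathlib

open SimpleGraph

/-- A proper conflict-free coloring: proper, and every non-isolated vertex has a color
appearing exactly once in its open neighborhood. -/
def IsPCFColoring {V : Type*} (G : SimpleGraph V) {n : ℕ} (c : V → Fin n) : Prop :=
  (∀ u v, G.Adj u v → c u ≠ c v) ∧
  ∀ v : V, (G.neighborSet v).Nonempty →
    ∃ k : Fin n, ∃! u, u ∈ G.neighborSet v ∧ c u = k

/-- The PCF chromatic number. -/
noncomputable def pcfChromNum {V : Type*} (G : SimpleGraph V) : ℕ :=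
  sInf {n | ∃ c : V → Fin n, IsPCFColoring G c}

/-- The chromatic number (as a natural number). -/
noncomputable def chromNum {V : Type*} (G : SimpleGraph V) : ℕ :=
  sInf {n | G.Colorable n}
namespace PCFAux

/-- distinctness of two fresh colors -/
lemma exists_ne_ne : ∀ a b : Fin 4, ∃ x : Fin 4, x ≠ a ∧ x ≠ b := by decide

lemma fin4_succ_ne : ∀ a : Fin 4, a + 1 ≠ a := by decide

set_option maxHeartbeats 1000000
set_option synthInstance.maxHeartbeats 1000000
set_option synthInstance.maxSize 2000
set_option maxRecDepth 100000
lemma seq5' : ∀ A1 A2 B1 B2 : Fin 4, A1 = A2 ∨ B1 = B2 ∨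
    ∃ x1 x2 x3 x4 x5 : Fin 4,
      x1 ≠ A1 ∧ x1 ≠ A2 ∧ x2 ≠ A1 ∧ x4 ≠ B1 ∧ x5 ≠ B1 ∧ x5 ≠ B2 ∧ x1 ≠ x5 ∧
      x1 ≠ x2 ∧ x2 ≠ x3 ∧ x3 ≠ x4 ∧ x4 ≠ x5 ∧ x1 ≠ x3 ∧ x2 ≠ x4 ∧ x3 ≠ x5 := by decide   -- SLOW_DECIDE

lemma seq5 {A1 A2 B1 B2 : Fin 4} (h1 : A1 ≠ A2) (h2 : B1 ≠ B2) :
    ∃ x1 x2 x3 x4 x5 : Fin 4,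
      x1 ≠ A1 ∧ x1 ≠ A2 ∧ x2 ≠ A1 ∧ x4 ≠ B1 ∧ x5 ≠ B1 ∧ x5 ≠ B2 ∧ x1 ≠ x5 ∧
      x1 ≠ x2 ∧ x2 ≠ x3 ∧ x3 ≠ x4 ∧ x4 ≠ x5 ∧ x1 ≠ x3 ∧ x2 ≠ x4 ∧ x3 ≠ x5 := by
  rcases seq5' A1 A2 B1 B2 with h | h | h
  · exact absurd h h1
  · exact absurd h h2
  · exact h

set_option linter.unusedSectionVars false

variable {V : Type*} [Fintype V] [DecidableEq V] (G : SimpleGraph V) [DecidableRel G.Adj]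

/-- The "far" hypothesis. -/
def Far : Prop :=
  ∀ u v : V, u ≠ v → 3 ≤ G.degree u → 3 ≤ G.degree v → ∀ p : G.Walk u v, 6 ≤ p.length

section Subgraph

variable (S : Set V) [DecidablePred (· ∈ S)]

abbrev Gsub : SimpleGraph {v : V // v ∉ S} := G.comap (Subtype.val)

instance : DecidableRel (Gsub G S).Adj := fun a b => ‹DecidableRel G.Adj› a.val b.val

/-- hom from the induced subgraph to G -/
def subHom : Gsub G S →g G := ⟨Subtype.val, fun h => h⟩

lemma sub_degree (x : {v : V // v ∉ S}) : (Gsub G S).degree x ≤ G.degree x.val := by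
  classical
  unfold SimpleGraph.degree
  apply Finset.card_le_card_of_injOn Subtype.val
  · intro y hy
    rw [Finset.mem_coe, SimpleGraph.mem_neighborFinset] at hy
    rw [Finset.mem_coe, SimpleGraph.mem_neighborFinset]
    exact hy
  · exact Subtype.val_injective.injOn

lemma sub_egirth (h : 6 ≤ G.egirth) : 6 ≤ (Gsub G S).egirth := by
  rw [SimpleGraph.le_egirth] at h ⊢
  intro a w hw
  have := h a.val (w.map (subHom G S)) (hw.map (Subtype.val_injective))
  have e : (w.map (subHom G S)).length = w.length := SimpleGraph.Walk.length_map _ _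
  exact le_of_le_of_eq this (congrArg (Nat.cast : ℕ → ℕ∞) e)

lemma sub_far (h : Far G) : Far (Gsub G S) := by
  intro u v huv h3u h3v p
  have := h u.val v.val (fun he => huv (Subtype.ext he))
    (le_trans h3u (sub_degree G S u)) (le_trans h3v (sub_degree G S v))
    (p.map (subHom G S))
  have e : (p.map (subHom G S)).length = p.length := SimpleGraph.Walk.length_map _ _
  exact le_of_le_of_eq this e

end Subgraph

/-- helper: a vertex whose neighbor set is exactly a pair with distinct colors -/
lemma pair_unique {c : V → Fin 4} {v p q : V} (hp : G.Adj v p)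
    (hall : ∀ z, G.Adj v z → z = p ∨ z = q) (hc : c p ≠ c q) :
    ∃ k : Fin 4, ∃! z, z ∈ G.neighborSet v ∧ c z = k := by
  refine ⟨c p, p, ⟨hp, rfl⟩, ?_⟩
  rintro z ⟨hz, hck⟩
  rcases hall z hz with rfl | rfl
  · rfl
  · exact absurd hck.symm hc

/-- helper: unique neighbor color via transfer from the subgraph -/
lemma transfer_unique {S : Set V} [DecidablePred (· ∈ S)]
    {c' : {v : V // v ∉ S} → Fin 4} {c : V → Fin 4}
    (hagree : ∀ v (h : v ∉ S), c v = c' ⟨v, h⟩)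
    (v : V) (hv : v ∉ S) (k : Fin 4)
    (hex : ∃! z, z ∈ (Gsub G S).neighborSet ⟨v, hv⟩ ∧ c' z = k)
    (hS : ∀ y, G.Adj v y → y ∈ S → c y ≠ k) :
    ∃! z, z ∈ G.neighborSet v ∧ c z = k := by
  obtain ⟨z', ⟨hz'adj, hz'c⟩, huniq⟩ := hex
  refine ⟨z'.val, ⟨hz'adj, by rw [hagree z'.val z'.prop]; exact hz'c⟩, ?_⟩
  rintro z ⟨hz, hck⟩
  by_cases hzS : z ∈ S
  · exact absurd hck (hS z hz hzS)
  · have := huniq ⟨z, hzS⟩ ⟨hz, by rw [← hagree z hzS]; exact hck⟩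
    exact congrArg Subtype.val this

end PCFAux
namespace PCFAux
set_option linter.unusedSectionVars false

variable {V : Type*} [Fintype V] [DecidableEq V] (G : SimpleGraph V) [DecidableRel G.Adj]

/-- Build a walk along a sequence of pairwise-adjacent vertices. -/
def mkWalk (a : ℕ → V) (h : ∀ n, G.Adj (a n) (a (n + 1))) : (n : ℕ) → G.Walk (a 0) (a n)
  | 0 => SimpleGraph.Walk.nil
  | n + 1 => (mkWalk a h n).concat (h n)

lemma mkWalk_length (a : ℕ → V) (h : ∀ n, G.Adj (a n) (a (n + 1))) (n : ℕ) :
    (mkWalk G a h n).length = n := by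
  induction n with
  | zero => rfl
  | succ n ih => rw [mkWalk, SimpleGraph.Walk.length_concat, ih]

lemma mkWalk_support (a : ℕ → V) (h : ∀ n, G.Adj (a n) (a (n + 1))) (n : ℕ) :
    (mkWalk G a h n).support = (List.range (n + 1)).map a := by
  induction n with
  | zero => rfl
  | succ n ih =>
      rw [mkWalk, SimpleGraph.Walk.support_concat, ih, List.range_succ (n := n + 1),
        List.map_append]
      rfl

lemma mkWalk_edges (a : ℕ → V) (h : ∀ n, G.Adj (a n) (a (n + 1))) (n : ℕ) :
    (mkWalk G a h n).edges = (List.range n).map (fun i => s(a i, a (i + 1))) := by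
  induction n with
  | zero => rfl
  | succ n ih =>
      rw [mkWalk, SimpleGraph.Walk.edges_concat, ih, List.range_succ,
        List.map_append, List.concat_eq_append]
      rfl

/-- the "next vertex" of a thread: some neighbor of `c` other than `p`. -/
noncomputable def nxt (d c p : V) : V :=
  if h : ((G.neighborFinset c).erase p).Nonempty then h.choose else d

lemma nxt_spec (d c p : V) (h2 : 2 ≤ G.degree c) :
    G.Adj c (nxt G d c p) ∧ nxt G d c p ≠ p := by
  have hne : ((G.neighborFinset c).erase p).Nonempty := by
    rw [← Finset.card_pos]
    have h1 : (G.neighborFinset c).card - 1 ≤ ((G.neighborFinset c).erase p).card :=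
      Finset.pred_card_le_card_erase
    have h3 : G.degree c = (G.neighborFinset c).card := rfl
    omega
  rw [nxt, dif_pos hne]
  have hs := hne.choose_spec
  rw [Finset.mem_erase, SimpleGraph.mem_neighborFinset] at hs
  exact ⟨hs.2, hs.1⟩

/-- the thread sequence starting at `u` in direction `v1`. -/
noncomputable def thr (u v1 : V) : ℕ → V := fun n =>
  (Nat.rec (motive := fun _ => V × V) (u, v1)
    (fun _ pr => (pr.2, nxt G v1 pr.2 pr.1)) n).1

variable {G}

section ThrFacts

variable {u v1 : V} (hdeg : ∀ v : V, 2 ≤ G.degree v) (hadj0 : G.Adj u v1)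

lemma thr_zero : thr G u v1 0 = u := rfl

lemma thr_succ_succ (n : ℕ) :
    thr G u v1 (n + 2) = nxt G v1 (thr G u v1 (n + 1)) (thr G u v1 n) := rfl

include hdeg hadj0

lemma thr_adj : ∀ n, G.Adj (thr G u v1 n) (thr G u v1 (n + 1)) := by
  intro n
  induction n with
  | zero => exact hadj0
  | succ n _ =>
      rw [thr_succ_succ]
      exact (nxt_spec G v1 _ _ (hdeg _)).1

lemma thr_nb : ∀ n, thr G u v1 (n + 2) ≠ thr G u v1 n := by
  intro n
  rw [thr_succ_succ]
  exact (nxt_spec G v1 _ _ (hdeg _)).2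

lemma thr_nbhd (i : ℕ) (hi : 1 ≤ i) (hd2 : G.degree (thr G u v1 i) = 2) :
    G.neighborFinset (thr G u v1 i) = {thr G u v1 (i - 1), thr G u v1 (i + 1)} := by
  have e1 : (i - 1) + 1 = i := by omega
  have h1 : G.Adj (thr G u v1 i) (thr G u v1 (i - 1)) := by
    have := (thr_adj hdeg hadj0 (i - 1)).symm
    rwa [e1] at this
  have h2 : G.Adj (thr G u v1 i) (thr G u v1 (i + 1)) := thr_adj hdeg hadj0 i
  have hne : thr G u v1 (i + 1) ≠ thr G u v1 (i - 1) := by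
    have := thr_nb hdeg hadj0 (i - 1)
    rwa [show (i - 1) + 2 = i + 1 by omega] at this
  symm
  apply Finset.eq_of_subset_of_card_le
  · intro z hz
    rw [Finset.mem_insert, Finset.mem_singleton] at hz
    rw [SimpleGraph.mem_neighborFinset]
    rcases hz with rfl | rfl
    · exact h1
    · exact h2
  · rw [Finset.card_insert_of_notMem (by simpa using hne.symm), Finset.card_singleton]
    exact le_of_eq hd2

lemma thr_inj (N : ℕ)
    (hOK : ∀ i, 1 ≤ i → i ≤ N → thr G u v1 i ≠ u ∧ G.degree (thr G u v1 i) = 2) :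
    ∀ j, j ≤ N + 1 → ∀ i, i < j → ¬(i = 0 ∧ j = N + 1) → thr G u v1 i ≠ thr G u v1 j := by
  intro j
  induction j using Nat.strong_induction_on with
  | _ j IH =>
    intro hjN i hij hexc heq
    rcases (show i + 1 = j ∨ i + 1 < j by omega) with hj1 | hj1
    · -- adjacent
      have := thr_adj hdeg hadj0 i
      rw [hj1, heq] at this
      exact G.loopless.irrefl _ this
    by_cases hi0 : i = 0
    · subst hi0
      have hjN' : j ≤ N := by
        rcases Nat.lt_or_ge j (N + 1) with h | h
        · omega
        · exact absurd ⟨rfl, by omega⟩ hexc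
      exact (hOK j (by omega) hjN').1 (by rw [← heq]; rfl)
    · have hiN : i ≤ N := by omega
      have hd2 := (hOK i (by omega) hiN).2
      have hnbhd := thr_nbhd hdeg hadj0 i (by omega) hd2
      have hadjj : G.Adj (thr G u v1 j) (thr G u v1 (j - 1)) := by
        have := (thr_adj hdeg hadj0 (j - 1)).symm
        rwa [show (j - 1) + 1 = j by omega] at this
      have hmem : thr G u v1 (j - 1) ∈ G.neighborFinset (thr G u v1 i) := by
        rw [SimpleGraph.mem_neighborFinset, heq]
        exact hadjj
      rw [hnbhd, Finset.mem_insert, Finset.mem_singleton] at hmem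
      rcases hmem with hmem | hmem
      · by_cases hi1 : i = 1
        · subst hi1
          have : thr G u v1 (j - 1) = u := by rw [hmem]; rfl
          exact (hOK (j - 1) (by omega) (by omega)).1 this
        · exact (IH (j - 1) (by omega) (by omega) (i - 1) (by omega)
            (by omega)) hmem.symm
      · rcases (show i + 1 = j - 1 ∨ i + 1 < j - 1 by omega) with h | h
        · have : thr G u v1 (i + 2) = thr G u v1 i := by
            rw [show i + 2 = j by omega, heq]
          exact thr_nb hdeg hadj0 i this
        · exact (IH (j - 1) (by omega) (by omega) (i + 1) (by omega)
            (by omega)) hmem.symm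

end ThrFacts

end PCFAux
namespace PCFAux
set_option linter.unusedSectionVars false

variable {V : Type*} [Fintype V] [DecidableEq V] {G : SimpleGraph V} [DecidableRel G.Adj]

lemma exists_thread [Nonempty V] (hdeg : ∀ v : V, 2 ≤ G.degree v)
    (hg : 6 ≤ G.egirth) (hfar : Far G) :
    ∃ a : ℕ → V, (∀ i, i < 6 → G.Adj (a i) (a (i + 1))) ∧
      (∀ i, 1 ≤ i → i ≤ 5 → G.degree (a i) = 2) ∧
      (∀ i j, i < j → j ≤ 6 → ¬(i = 0 ∧ j = 6) → a i ≠ a j) := by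
  classical
  obtain ⟨u, hu⟩ : ∃ u : V, (∀ v : V, G.degree v = 2) ∨ 3 ≤ G.degree u := by
    by_cases hb : ∃ b : V, 3 ≤ G.degree b
    · exact ⟨hb.choose, Or.inr hb.choose_spec⟩
    · push_neg at hb
      refine ⟨Classical.arbitrary V, Or.inl fun v => ?_⟩
      have h1 := hdeg v
      have h2 := hb v
      omega
  have hNu : (G.neighborFinset u).Nonempty := by
    rw [← Finset.card_pos]
    have := hdeg u
    have h3 : G.degree u = (G.neighborFinset u).card := rfl
    omega
  have hadj0 : G.Adj u hNu.choose := by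
    have := hNu.choose_spec
    rwa [SimpleGraph.mem_neighborFinset] at this
  set v1 := hNu.choose with hv1
  set a : ℕ → V := thr G u v1 with ha
  have ha0 : a 0 = u := rfl
  have hP : ∃ n, 1 ≤ n ∧ (a n = u ∨ 3 ≤ G.degree (a n)) := by
    by_contra hc
    push_neg at hc
    have hOK : ∀ i, 1 ≤ i → i ≤ Fintype.card V → a i ≠ u ∧ G.degree (a i) = 2 := by
      intro i hi _
      obtain ⟨h1, h2⟩ := hc i hi
      exact ⟨h1, by have := hdeg (a i); omega⟩
    have hinj := thr_inj hdeg hadj0 (Fintype.card V) hOK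
    have hf : Function.Injective (fun k : Fin (Fintype.card V + 1) => a k.val) := by
      intro k l hkl
      by_contra hne
      have hne' : k.val ≠ l.val := fun h => hne (Fin.ext h)
      rcases lt_or_gt_of_ne hne' with h | h
      · exact hinj l.val (by omega) k.val h (by have := l.isLt; omega) hkl
      · exact hinj k.val (by omega) l.val h (by have := k.isLt; omega) hkl.symm
    have := Fintype.card_le_of_injective _ hf
    simp at this
  set t := Nat.find hP with hts
  obtain ⟨ht1, hstop⟩ : 1 ≤ t ∧ (a t = u ∨ 3 ≤ G.degree (a t)) := Nat.find_spec hP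
  have hOK : ∀ i, 1 ≤ i → i ≤ t - 1 → a i ≠ u ∧ G.degree (a i) = 2 := by
    intro i hi hit
    have hlt : i < t := by omega
    have := Nat.find_min hP hlt
    rw [not_and_or] at this
    rcases this with h | h
    · omega
    · push_neg at h
      exact ⟨h.1, by have := hdeg (a i); omega⟩
  have hinj := thr_inj hdeg hadj0 (t - 1) hOK
  have hinj' : ∀ j, j ≤ t → ∀ i, i < j → ¬(i = 0 ∧ j = t) → a i ≠ a j := by
    intro j hj i hij hexc
    exact hinj j (by omega) i hij (by omega)
  -- t ≥ 6
  have ht6 : 6 ≤ t := by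
    by_cases hloop : a t = u
    · -- closed thread: a cycle of length t
      have ht3 : 3 ≤ t := by
        rcases (show t = 1 ∨ t = 2 ∨ 3 ≤ t by omega) with h | h | h
        · rw [h] at hloop
          exact absurd (hloop ▸ hadj0) (G.loopless.irrefl u)
        · exfalso
          have h2 := thr_nb hdeg hadj0 0
          rw [← ha] at h2
          apply h2
          show a 2 = a 0
          rw [ha0, ← h]
          exact hloop
        · exact h
      set W : G.Walk (a 0) (a t) := mkWalk G a (thr_adj hdeg hadj0) t with hW
      set q : G.Walk u u := W.copy ha0 hloop with hq
      have hcyc : q.IsCycle := by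
        refine ⟨⟨⟨?_⟩, ?_⟩, ?_⟩
        · -- edges nodup
          rw [hq, SimpleGraph.Walk.edges_copy, hW, mkWalk_edges]
          rw [List.nodup_map_iff_inj_on List.nodup_range]
          intro x hx y hy hfeq
          rw [List.mem_range] at hx hy
          by_contra hxy
          have key : ∀ x y : ℕ, x < y → y < t →
              s(a x, a (x + 1)) ≠ s(a y, a (y + 1)) := by
            intro x y hlt hyt heq2
            rw [Sym2.eq_iff] at heq2
            rcases heq2 with ⟨h1, _⟩ | ⟨h1, h2⟩
            · exact hinj' y (by omega) x hlt (by omega) h1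
            · rcases (show x + 1 = y ∨ x + 1 < y by omega) with h | h
              · have : a (x + 2) = a x := by
                  rw [show x + 2 = y + 1 by omega, ← h1]
                exact thr_nb hdeg hadj0 x this
              · exact hinj' y (by omega) (x + 1) h (by omega) h2
          rcases lt_or_gt_of_ne hxy with h | h
          · exact key x y h hy hfeq
          · exact key y x h hx hfeq.symm
        · -- nonempty
          intro hnil
          have := congrArg SimpleGraph.Walk.length hnil
          rw [hq, SimpleGraph.Walk.length_copy, hW, mkWalk_length] at this
          simp at this
          omega
        · -- support tail nodup
          rw [hq, SimpleGraph.Walk.support_copy, hW, mkWalk_support,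
            List.range_succ_eq_map, List.map_cons, List.map_map]
          simp only [List.tail_cons]
          rw [List.nodup_map_iff_inj_on List.nodup_range]
          intro x hx y hy hfeq
          rw [List.mem_range] at hx hy
          by_contra hxy
          simp only [Function.comp] at hfeq
          rcases lt_or_gt_of_ne hxy with h | h
          · exact hinj' (y + 1) (by omega) (x + 1) (by omega) (by omega) hfeq
          · exact hinj' (x + 1) (by omega) (y + 1) (by omega) (by omega) hfeq.symm
      have := SimpleGraph.le_egirth.mp hg u q hcyc
      rw [hq, SimpleGraph.Walk.length_copy, hW, mkWalk_length] at this
      exact_mod_cast this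
    · have hbr := hstop.resolve_left hloop
      have h3u : 3 ≤ G.degree u := by
        rcases hu with h | h
        · have := h (a t); omega
        · exact h
      set W : G.Walk u (a t) := (mkWalk G a (thr_adj hdeg hadj0) t).copy ha0 rfl with hW
      have := hfar u (a t) (fun h => hloop h.symm) h3u hbr W
      rw [hW, SimpleGraph.Walk.length_copy, mkWalk_length] at this
      exact this
  refine ⟨a, fun i _ => thr_adj hdeg hadj0 i, fun i hi hi5 => (hOK i hi (by omega)).2, ?_⟩
  intro i j hij hj6 hexc
  exact hinj' j (by omega) i hij (by omega)

end PCFAux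
namespace PCFAux
set_option linter.unusedSectionVars false

universe u

lemma aux : ∀ n : ℕ, ∀ (V : Type u) [Fintype V] [DecidableEq V] (G : SimpleGraph V),
    ∀ [DecidableRel G.Adj], Fintype.card V ≤ n → 6 ≤ G.egirth → Far G →
    ∃ c : V → Fin 4, IsPCFColoring G c := by
  intro n
  induction n with
  | zero =>
      intro V _ _ G _ hcard _ _
      have hE : IsEmpty V := Fintype.card_eq_zero_iff.mp (by omega)
      exact ⟨fun v => isEmptyElim v, fun u => isEmptyElim u, fun v => isEmptyElim v⟩
  | succ n IH =>
      intro V _ _ G _ hcard hg hfar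
      classical
      by_cases hE : IsEmpty V
      · exact ⟨fun v => isEmptyElim v, fun u => isEmptyElim u, fun v => isEmptyElim v⟩
      have hV : Nonempty V := not_isEmpty_iff.mp hE
      have hred : ∀ S : Set V, S.Nonempty →
          ∃ c' : {v : V // v ∉ S} → Fin 4, IsPCFColoring (Gsub G S) c' := by
        intro S hS
        have hlt : Fintype.card {v : V // v ∉ S} < Fintype.card V :=
          Fintype.card_subtype_lt (x := hS.choose) (by simpa using hS.choose_spec)
        exact IH _ (Gsub G S) (by omega) (sub_egirth G S hg) (sub_far G S hfar)
      by_cases h0 : ∃ v : V, G.degree v = 0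
      · -- isolated vertex
        obtain ⟨v, hv0⟩ := h0
        have hnb : ∀ z, ¬ G.Adj v z := by
          intro z hz
          have hmem : z ∈ G.neighborFinset v := by
            rwa [SimpleGraph.mem_neighborFinset]
          rw [Finset.card_eq_zero.mp hv0] at hmem
          exact absurd hmem (Finset.notMem_empty z)
        set S : Set V := {v} with hSdef
        obtain ⟨c', hc'⟩ := hred S ⟨v, rfl⟩
        have hmemS : ∀ w, w ∈ S ↔ w = v := fun w => Set.mem_singleton_iff
        set c : V → Fin 4 := fun w => if h : w ∈ S then 0 else c' ⟨w, h⟩ with hcdef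
        have hagree : ∀ w (h : w ∉ S), c w = c' ⟨w, h⟩ := fun w h => dif_neg h
        refine ⟨c, ?_, ?_⟩
        · intro p q hpq
          have hpS : p ∉ S := by
            rw [hmemS]; rintro rfl; exact hnb q hpq
          have hqS : q ∉ S := by
            rw [hmemS]; rintro rfl; exact hnb p hpq.symm
          rw [hagree p hpS, hagree q hqS]
          exact hc'.1 ⟨p, hpS⟩ ⟨q, hqS⟩ hpq
        · intro w hw
          obtain ⟨z, hz⟩ := hw
          have hwS : w ∉ S := by
            rw [hmemS]; rintro rfl; exact hnb z hz
          have hzS : z ∉ S := by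
            rw [hmemS]; rintro rfl; exact hnb w hz.symm
          obtain ⟨k, hk⟩ := hc'.2 ⟨w, hwS⟩ ⟨⟨z, hzS⟩, hz⟩
          refine ⟨k, transfer_unique G hagree w hwS k hk ?_⟩
          intro y hy hyS
          rw [hmemS] at hyS
          subst hyS
          exact absurd hy.symm (hnb w)
      by_cases h1 : ∃ v : V, G.degree v = 1
      · -- leaf vertex
        obtain ⟨v, hv1⟩ := h1
        obtain ⟨u, hNv⟩ : ∃ u, G.neighborFinset v = {u} := Finset.card_eq_one.mp hv1
        have hadj_vu : G.Adj v u := by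
          rw [← SimpleGraph.mem_neighborFinset, hNv]
          exact Finset.mem_singleton_self u
        have hall_v : ∀ z, G.Adj v z → z = u := by
          intro z hz
          have : z ∈ G.neighborFinset v := by rwa [SimpleGraph.mem_neighborFinset]
          rwa [hNv, Finset.mem_singleton] at this
        have hne_uv : u ≠ v := hadj_vu.ne'
        set S : Set V := {v} with hSdef
        obtain ⟨c', hc'⟩ := hred S ⟨v, rfl⟩
        have hmemS : ∀ w, w ∈ S ↔ w = v := fun w => Set.mem_singleton_iff
        have huS : u ∉ S := by rw [hmemS]; exact hne_uv
        set u' : {w : V // w ∉ S} := ⟨u, huS⟩ with hu'def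
        -- choose the color for v
        obtain ⟨α, hα1, hα2⟩ : ∃ α : Fin 4, α ≠ c' u' ∧
            (((Gsub G S).neighborSet u').Nonempty →
              ∃ k : Fin 4, (∃! z, z ∈ (Gsub G S).neighborSet u' ∧ c' z = k) ∧ α ≠ k) := by
          by_cases hNu' : ((Gsub G S).neighborSet u').Nonempty
          · obtain ⟨k, hk⟩ := hc'.2 u' hNu'
            obtain ⟨α, hα1, hα2⟩ := exists_ne_ne (c' u') k
            exact ⟨α, hα1, fun _ => ⟨k, hk, hα2⟩⟩
          · exact ⟨c' u' + 1, fin4_succ_ne _, fun h => absurd h hNu'⟩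
        set c : V → Fin 4 := fun w => if h : w ∈ S then α else c' ⟨w, h⟩ with hcdef
        have hagree : ∀ w (h : w ∉ S), c w = c' ⟨w, h⟩ := fun w h => dif_neg h
        have hcv : c v = α := dif_pos rfl
        refine ⟨c, ?_, ?_⟩
        · -- proper
          intro p q hpq
          by_cases hpS : p ∈ S
          · rw [hmemS] at hpS; subst hpS
            have hq : q = u := hall_v q hpq
            rw [hcv, hq, hagree u huS]
            exact hα1
          by_cases hqS : q ∈ S
          · rw [hmemS] at hqS; subst hqS
            have hp : p = u := hall_v p hpq.symm
            rw [hcv, hp, hagree u huS]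
            exact hα1.symm
          · rw [hagree p hpS, hagree q hqS]
            exact hc'.1 ⟨p, hpS⟩ ⟨q, hqS⟩ hpq
        · -- unique neighbor colors
          intro w hw
          by_cases hwS : w ∈ S
          · rw [hmemS] at hwS; subst hwS
            refine ⟨c u, u, ⟨hadj_vu, rfl⟩, ?_⟩
            rintro z ⟨hz, -⟩
            exact hall_v z hz
          by_cases hwu : w = u
          · rw [hwu]
            by_cases hNu' : ((Gsub G S).neighborSet u').Nonempty
            · obtain ⟨k, hk, hαk⟩ := hα2 hNu'
              refine ⟨k, transfer_unique G hagree u huS k hk ?_⟩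
              intro y hy hyS
              rw [hmemS] at hyS; subst hyS
              rw [hcv]
              exact hαk
            · -- u has only v as neighbor
              refine ⟨α, v, ⟨hadj_vu.symm, hcv⟩, ?_⟩
              rintro z ⟨hz, -⟩
              by_contra hzv
              have hzS : z ∉ S := by rw [hmemS]; exact hzv
              exact hNu' ⟨⟨z, hzS⟩, hz⟩
          · -- other vertices
            obtain ⟨z, hz⟩ := hw
            have hzS : z ∉ S := by
              rw [hmemS]; rintro rfl
              exact hwu (hall_v w hz.symm)
            obtain ⟨k, hk⟩ := hc'.2 ⟨w, hwS⟩ ⟨⟨z, hzS⟩, hz⟩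
            refine ⟨k, transfer_unique G hagree w hwS k hk ?_⟩
            intro y hy hyS
            rw [hmemS] at hyS; subst hyS
            exact absurd (hall_v w hy.symm) hwu
      · -- thread case
        push_neg at h0 h1
        have hdeg : ∀ v : V, 2 ≤ G.degree v := by
          intro v
          have := h0 v
          have := h1 v
          omega
        obtain ⟨a, hadj6, hdeg5, hdist⟩ := exists_thread hdeg hg hfar
        set S : Set V := {w | ∃ i, 1 ≤ i ∧ i ≤ 5 ∧ a i = w} with hSdef
        have hmemS : ∀ w, w ∈ S ↔ ∃ i, 1 ≤ i ∧ i ≤ 5 ∧ a i = w := fun w => Iff.rfl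
        have haS : ∀ i, 1 ≤ i → i ≤ 5 → a i ∈ S := fun i hi1 hi5 => ⟨i, hi1, hi5, rfl⟩
        have hu_S : a 0 ∉ S := by
          rintro ⟨i, hi1, hi5, hai⟩
          exact hdist 0 i (by omega) (by omega) (by omega) hai.symm
        have hr_S : a 6 ∉ S := by
          rintro ⟨i, hi1, hi5, hai⟩
          exact hdist i 6 (by omega) (by omega) (by omega) hai
        have hadjP : ∀ i, 1 ≤ i → i ≤ 5 → G.Adj (a i) (a (i - 1)) := by
          intro i hi1 hi5
          have := (hadj6 (i - 1) (by omega)).symm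
          rwa [show i - 1 + 1 = i by omega] at this
        have hnb : ∀ i, 1 ≤ i → i ≤ 5 →
            G.neighborFinset (a i) = {a (i - 1), a (i + 1)} := by
          intro i hi1 hi5
          have hne : a (i + 1) ≠ a (i - 1) :=
            (hdist (i - 1) (i + 1) (by omega) (by omega) (by omega)).symm
          symm
          apply Finset.eq_of_subset_of_card_le
          · intro z hz
            rw [Finset.mem_insert, Finset.mem_singleton] at hz
            rw [SimpleGraph.mem_neighborFinset]
            rcases hz with rfl | rfl
            · exact hadjP i hi1 hi5
            · exact hadj6 i (by omega)
          · rw [Finset.card_insert_of_notMem (by simpa using hne.symm), Finset.card_singleton]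
            exact le_of_eq (hdeg5 i hi1 hi5)
        have hall : ∀ i, 1 ≤ i → i ≤ 5 → ∀ z, G.Adj (a i) z →
            z = a (i - 1) ∨ z = a (i + 1) := by
          intro i hi1 hi5 z hz
          have : z ∈ G.neighborFinset (a i) := by rwa [SimpleGraph.mem_neighborFinset]
          rw [hnb i hi1 hi5, Finset.mem_insert, Finset.mem_singleton] at this
          exact this
        have hcap0 : ∀ i, 1 ≤ i → i ≤ 5 → G.Adj (a 0) (a i) →
            i = 1 ∨ (a 6 = a 0 ∧ i = 5) := by
          intro i hi1 hi5 hadj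
          rcases hall i hi1 hi5 (a 0) hadj.symm with h | h
          · rcases (show i = 1 ∨ 2 ≤ i by omega) with h1' | h1'
            · exact Or.inl h1'
            · exact absurd h (hdist 0 (i - 1) (by omega) (by omega) (by omega))
          · rcases (show i + 1 ≤ 5 ∨ i + 1 = 6 by omega) with h6 | h6
            · exact absurd h (hdist 0 (i + 1) (by omega) (by omega) (by omega))
            · refine Or.inr ⟨?_, by omega⟩
              rw [h6] at h
              exact h.symm
        have hcap6 : ∀ i, 1 ≤ i → i ≤ 5 → G.Adj (a 6) (a i) →
            i = 5 ∨ (a 6 = a 0 ∧ i = 1) := by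
          intro i hi1 hi5 hadj
          rcases hall i hi1 hi5 (a 6) hadj.symm with h | h
          · rcases (show i = 1 ∨ 2 ≤ i by omega) with h1' | h1'
            · rw [h1'] at h
              exact Or.inr ⟨h, h1'⟩
            · exact absurd h.symm (hdist (i - 1) 6 (by omega) (by omega) (by omega))
          · rcases (show i + 1 ≤ 5 ∨ i + 1 = 6 by omega) with h6 | h6
            · exact absurd h.symm (hdist (i + 1) 6 (by omega) (by omega) (by omega))
            · exact Or.inl (by omega)
        have hout : ∀ w, w ∉ S → w ≠ a 0 → w ≠ a 6 → ∀ z, G.Adj w z → z ∉ S := by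
          intro w hwS hw0 hw6 z hz hzS
          obtain ⟨i, hi1, hi5, hai⟩ := (hmemS z).mp hzS
          rw [← hai] at hz
          rcases hall i hi1 hi5 w hz.symm with h | h
          · rcases (show i - 1 = 0 ∨ 1 ≤ i - 1 by omega) with h0' | h0'
            · rw [h0'] at h
              exact hw0 h
            · exact hwS (h ▸ haS (i - 1) h0' (by omega))
          · rcases (show i + 1 = 6 ∨ i + 1 ≤ 5 by omega) with h6' | h6'
            · rw [h6'] at h
              exact hw6 h
            · exact hwS (h ▸ haS (i + 1) (by omega) h6')
        obtain ⟨c', hc'⟩ := hred S ⟨a 1, haS 1 le_rfl (by omega)⟩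
        set u' : {w : V // w ∉ S} := ⟨a 0, hu_S⟩ with hu'def
        set r' : {w : V // w ∉ S} := ⟨a 6, hr_S⟩ with hr'def
        set A1 : Fin 4 := c' u' with hA1def
        set B1 : Fin 4 := c' r' with hB1def
        obtain ⟨A2, hA2A1, hA2u⟩ : ∃ A2 : Fin 4, A2 ≠ A1 ∧
            (((Gsub G S).neighborSet u').Nonempty →
              ∃! z, z ∈ (Gsub G S).neighborSet u' ∧ c' z = A2) := by
          by_cases hNu' : ((Gsub G S).neighborSet u').Nonempty
          · obtain ⟨k, hk⟩ := hc'.2 u' hNu'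
            have hne : A1 ≠ k := by
              obtain ⟨y, ⟨hyadj, hyc⟩, -⟩ := hk
              have h := hc'.1 u' y hyadj
              rwa [hyc] at h
            exact ⟨k, hne.symm, fun _ => hk⟩
          · exact ⟨A1 + 1, fin4_succ_ne _, fun h => absurd h hNu'⟩
        obtain ⟨B2, hB2B1, hB2r, hB2loop⟩ : ∃ B2 : Fin 4, B2 ≠ B1 ∧
            ((((Gsub G S).neighborSet r').Nonempty →
              ∃! z, z ∈ (Gsub G S).neighborSet r' ∧ c' z = B2)) ∧
            (a 6 = a 0 → B2 = A2) := by
          by_cases hloop : a 6 = a 0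
          · have hr'u' : r' = u' := Subtype.ext hloop
            have hB1A1 : B1 = A1 := congrArg c' hr'u'
            refine ⟨A2, by rw [hB1A1]; exact hA2A1, ?_, fun _ => rfl⟩
            rw [hr'u']
            exact hA2u
          · by_cases hNr' : ((Gsub G S).neighborSet r').Nonempty
            · obtain ⟨k, hk⟩ := hc'.2 r' hNr'
              have hne : B1 ≠ k := by
                obtain ⟨y, ⟨hyadj, hyc⟩, -⟩ := hk
                have h := hc'.1 r' y hyadj
                rwa [hyc] at h
              exact ⟨k, hne.symm, fun _ => hk, fun h => absurd h hloop⟩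
            · exact ⟨B1 + 1, fin4_succ_ne _, fun h => absurd h hNr', fun h => absurd h hloop⟩
        obtain ⟨x1, x2, x3, x4, x5, hx1A1, hx1A2, hx2A1, hx4B1, hx5B1, hx5B2, hx15,
          hx12, hx23, hx34, hx45, hx13, hx24, hx35⟩ := seq5 hA2A1.symm hB2B1.symm
        set x : ℕ → Fin 4 := fun i =>
          if i = 1 then x1 else if i = 2 then x2 else if i = 3 then x3
          else if i = 4 then x4 else x5 with hxdef
        have hx_1 : x 1 = x1 := rfl
        have hx_2 : x 2 = x2 := rfl
        have hx_3 : x 3 = x3 := rfl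
        have hx_4 : x 4 = x4 := rfl
        have hx_5 : x 5 = x5 := rfl
        set c : V → Fin 4 := fun w =>
          if h : w ∈ S then x (((hmemS w).mp h).choose) else c' ⟨w, h⟩ with hcdef
        have hagree : ∀ w (h : w ∉ S), c w = c' ⟨w, h⟩ := fun w h => dif_neg h
        have hc_ai : ∀ i, 1 ≤ i → i ≤ 5 → c (a i) = x i := by
          intro i hi1 hi5
          have hmem : a i ∈ S := haS i hi1 hi5
          have hstep : c (a i) = x (((hmemS (a i)).mp hmem).choose) := dif_pos hmem
          rw [hstep]
          obtain ⟨hj1, hj5, hjeq⟩ := ((hmemS (a i)).mp hmem).choose_spec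
          have hji : ((hmemS (a i)).mp hmem).choose = i := by
            by_contra hne
            rcases lt_or_gt_of_ne hne with h | h
            · exact hdist _ i h (by omega) (by omega) hjeq
            · exact hdist i _ h (by omega) (by omega) hjeq.symm
          rw [hji]
        have hc_a0 : c (a 0) = A1 := by rw [hagree (a 0) hu_S]
        have hc_a6 : c (a 6) = B1 := by rw [hagree (a 6) hr_S]
        have hpropi : ∀ i, 1 ≤ i → i ≤ 5 → ∀ z, G.Adj (a i) z → c (a i) ≠ c z := by
          intro i hi1 hi5 z hz
          rcases hall i hi1 hi5 z hz with rfl | rfl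
          · interval_cases i
            · show c (a 1) ≠ c (a 0)
              rw [hc_ai 1 (by omega) (by omega), hc_a0, hx_1]
              exact hx1A1
            · show c (a 2) ≠ c (a 1)
              rw [hc_ai 2 (by omega) (by omega), hc_ai 1 (by omega) (by omega), hx_1, hx_2]
              exact hx12.symm
            · show c (a 3) ≠ c (a 2)
              rw [hc_ai 3 (by omega) (by omega), hc_ai 2 (by omega) (by omega), hx_2, hx_3]
              exact hx23.symm
            · show c (a 4) ≠ c (a 3)
              rw [hc_ai 4 (by omega) (by omega), hc_ai 3 (by omega) (by omega), hx_3, hx_4]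
              exact hx34.symm
            · show c (a 5) ≠ c (a 4)
              rw [hc_ai 5 (by omega) (by omega), hc_ai 4 (by omega) (by omega), hx_4, hx_5]
              exact hx45.symm
          · interval_cases i
            · show c (a 1) ≠ c (a 2)
              rw [hc_ai 1 (by omega) (by omega), hc_ai 2 (by omega) (by omega), hx_1, hx_2]
              exact hx12
            · show c (a 2) ≠ c (a 3)
              rw [hc_ai 2 (by omega) (by omega), hc_ai 3 (by omega) (by omega), hx_2, hx_3]
              exact hx23
            · show c (a 3) ≠ c (a 4)
              rw [hc_ai 3 (by omega) (by omega), hc_ai 4 (by omega) (by omega), hx_3, hx_4]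
              exact hx34
            · show c (a 4) ≠ c (a 5)
              rw [hc_ai 4 (by omega) (by omega), hc_ai 5 (by omega) (by omega), hx_4, hx_5]
              exact hx45
            · show c (a 5) ≠ c (a 6)
              rw [hc_ai 5 (by omega) (by omega), hc_a6, hx_5]
              exact hx5B1
        refine ⟨c, ?_, ?_⟩
        · intro p q hpq
          by_cases hpS : p ∈ S
          · obtain ⟨i, hi1, hi5, hai⟩ := (hmemS p).mp hpS
            subst hai
            exact hpropi i hi1 hi5 q hpq
          by_cases hqS : q ∈ S
          · obtain ⟨i, hi1, hi5, hai⟩ := (hmemS q).mp hqS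
            subst hai
            exact (hpropi i hi1 hi5 p hpq.symm).symm
          · rw [hagree p hpS, hagree q hqS]
            exact hc'.1 _ _ hpq
        · intro w hw
          by_cases hwS : w ∈ S
          · obtain ⟨i, hi1, hi5, hai⟩ := (hmemS w).mp hwS
            subst hai
            apply pair_unique G (hadjP i hi1 hi5) (hall i hi1 hi5)
            interval_cases i
            · show c (a 0) ≠ c (a 2)
              rw [hc_a0, hc_ai 2 (by omega) (by omega), hx_2]
              exact hx2A1.symm
            · show c (a 1) ≠ c (a 3)
              rw [hc_ai 1 (by omega) (by omega), hc_ai 3 (by omega) (by omega), hx_1, hx_3]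
              exact hx13
            · show c (a 2) ≠ c (a 4)
              rw [hc_ai 2 (by omega) (by omega), hc_ai 4 (by omega) (by omega), hx_2, hx_4]
              exact hx24
            · show c (a 3) ≠ c (a 5)
              rw [hc_ai 3 (by omega) (by omega), hc_ai 5 (by omega) (by omega), hx_3, hx_5]
              exact hx35
            · show c (a 4) ≠ c (a 6)
              rw [hc_ai 4 (by omega) (by omega), hc_a6, hx_4]
              exact hx4B1
          by_cases hw0 : w = a 0
          · rw [hw0]
            by_cases hNu' : ((Gsub G S).neighborSet u').Nonempty
            · refine ⟨A2, transfer_unique G hagree (a 0) hu_S A2 (hA2u hNu') ?_⟩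
              intro y hy hyS
              obtain ⟨i, hi1, hi5, hai⟩ := (hmemS y).mp hyS
              subst hai
              rcases hcap0 i hi1 hi5 hy with h | ⟨hloop, h⟩
              · subst h
                rw [hc_ai 1 (by omega) (by omega), hx_1]
                exact hx1A2
              · subst h
                rw [hc_ai 5 (by omega) (by omega), hx_5, ← hB2loop hloop]
                exact hx5B2
            · have hall0 : ∀ z, G.Adj (a 0) z → z = a 1 ∨ z = a 5 := by
                intro z hz
                by_cases hzS : z ∈ S
                · obtain ⟨i, hi1, hi5, hai⟩ := (hmemS z).mp hzS
                  subst hai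
                  rcases hcap0 i hi1 hi5 hz with h | ⟨-, h⟩
                  · exact Or.inl (by rw [h])
                  · exact Or.inr (by rw [h])
                · exact absurd ⟨⟨z, hzS⟩, hz⟩ hNu'
              refine pair_unique G (hadj6 0 (by omega)) hall0 ?_
              rw [hc_ai 1 (by omega) (by omega), hc_ai 5 (by omega) (by omega), hx_1, hx_5]
              exact hx15
          by_cases hw6 : w = a 6
          · rw [hw6]
            by_cases hNr' : ((Gsub G S).neighborSet r').Nonempty
            · refine ⟨B2, transfer_unique G hagree (a 6) hr_S B2 (hB2r hNr') ?_⟩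
              intro y hy hyS
              obtain ⟨i, hi1, hi5, hai⟩ := (hmemS y).mp hyS
              subst hai
              rcases hcap6 i hi1 hi5 hy with h | ⟨hloop, h⟩
              · subst h
                rw [hc_ai 5 (by omega) (by omega), hx_5]
                exact hx5B2
              · subst h
                rw [hc_ai 1 (by omega) (by omega), hx_1, hB2loop hloop]
                exact hx1A2
            · have hnloop : a 6 ≠ a 0 := fun h => hw0 (hw6.trans h)
              refine ⟨c (a 5), a 5, ⟨(hadj6 5 (by omega)).symm, rfl⟩, ?_⟩
              rintro z ⟨hz, -⟩
              by_cases hzS : z ∈ S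
              · obtain ⟨i, hi1, hi5, hai⟩ := (hmemS z).mp hzS
                subst hai
                rcases hcap6 i hi1 hi5 hz with h | ⟨hloop, -⟩
                · rw [h]
                · exact absurd hloop hnloop
              · exact (hNr' ⟨⟨z, hzS⟩, hz⟩).elim
          · obtain ⟨z, hz⟩ := hw
            have hzS : z ∉ S := hout w hwS hw0 hw6 z hz
            obtain ⟨k, hk⟩ := hc'.2 ⟨w, hwS⟩ ⟨⟨z, hzS⟩, hz⟩
            refine ⟨k, transfer_unique G hagree w hwS k hk ?_⟩
            intro y hy hyS
            exact absurd hyS (hout w hwS hw0 hw6 y hy)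

end PCFAux


theorem pcf_le_four_of_girth_and_far {V : Type*} [Fintype V] (G : SimpleGraph V)
    [DecidableRel G.Adj] (hgirth : 6 ≤ G.egirth)
    (hfar : ∀ u v : V, u ≠ v → 3 ≤ G.degree u → 3 ≤ G.degree v →
      ∀ p : G.Walk u v, 6 ≤ p.length) :
    pcfChromNum G ≤ 4 := by
  classical
  obtain ⟨c, hc⟩ := PCFAux.aux (Fintype.card V) V G le_rfl hgirth hfar
  exact Nat.sInf_le ⟨c, hc⟩
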